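/- Let η ∈ ℝ with η ≠ 0, and let u, v : U → ℝ be smooth functions on an open set U ⊆ ℝ² satisfying u_{xt} = 2e^{u − v_x}, v_{xt} = u_x·e^{u + v_x} on U. Define F₁₁ = −(√2/2)u_x, F₂₁ = η, F₃₁ = −η√2 + e^{−v_x}, F₁₂ = 0, F₂₂ = √2·e^{u}, F₃₂ = −2e^{u}. Then on U the structure equations with δ = 1 hold: −∂_t F₁₁ + ∂_x F₁₂ = F₃₁F₂₂ − F₃₂F₂₁, −∂_t F₂₁ + ∂_x F₂₂ = F₁₁F₃₂ − F₁₂F₃₁, −∂_t F₃₁ + ∂_x F₃₂ = F₁₁F₂₂ − F₁₂F₂₁; hence this system describes pseudospherical surfaces with these associated functions. -/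

import Mathlib

open Real

/-- Partial derivative in the `x` direction of a function on the `(x, t)` plane. -/
noncomputable def pdx (f : ℝ × ℝ → ℝ) (p : ℝ × ℝ) : ℝ := fderiv ℝ f p (1, 0)

/-- Partial derivative in the `t` direction of a function on the `(x, t)` plane. -/
noncomputable def pdt (f : ℝ × ℝ → ℝ) (p : ℝ × ℝ) : ℝ := fderiv ℝ f p (0, 1)

/-- The structure equations of a surface of constant Gaussian curvature `-δ`. -/
def StructEqs (δ : ℝ) (U : Set (ℝ × ℝ)) (F11 F12 F21 F22 F31 F32 : ℝ × ℝ → ℝ) : Prop :=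
  ∀ p ∈ U,
    -(pdt F11 p) + pdx F12 p = F31 p * F22 p - F32 p * F21 p ∧
    -(pdt F21 p) + pdx F22 p = F11 p * F32 p - F12 p * F31 p ∧
    -(pdt F31 p) + pdx F32 p = δ * (F11 p * F22 p - F12 p * F21 p)

lemma pdx_contDiffAt {f : ℝ × ℝ → ℝ} {p : ℝ × ℝ}
    (hf : ContDiffAt ℝ (⊤ : ℕ∞) f p) : ContDiffAt ℝ (⊤ : ℕ∞) (pdx f) p := by
  have h1 : ContDiffAt ℝ (⊤ : ℕ∞) (fderiv ℝ f) p := hf.fderiv_right (by exact_mod_cast le_top)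
  exact h1.clm_apply contDiffAt_const

lemma pd_const_mul {f : ℝ × ℝ → ℝ} {p : ℝ × ℝ} (c : ℝ)
    (hf : DifferentiableAt ℝ f p) (w : ℝ × ℝ) :
    fderiv ℝ (fun q => c * f q) p w = c * fderiv ℝ f p w := by
  rw [fderiv_const_mul hf c]; rfl

/-- The system `u_xt = 2e^{u − v_x}`, `v_xt = u_x e^{u + v_x}`
describes pseudospherical surfaces. -/
theorem system_exeex2_describes_pss (η : ℝ) (hη : η ≠ 0)
    (U : Set (ℝ × ℝ)) (hU : IsOpen U)
    (u v : ℝ × ℝ → ℝ)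
    (hu : ContDiffOn ℝ (⊤ : ℕ∞) u U) (hv : ContDiffOn ℝ (⊤ : ℕ∞) v U)
    (heq1 : ∀ p ∈ U, pdt (pdx u) p = 2 * Real.exp (u p - pdx v p))
    (heq2 : ∀ p ∈ U, pdt (pdx v) p = pdx u p * Real.exp (u p + pdx v p)) :
    StructEqs 1 U
      (fun q => -(Real.sqrt 2 / 2) * pdx u q)
      (fun _ => 0)
      (fun _ => η)
      (fun q => Real.sqrt 2 * Real.exp (u q))
      (fun q => -(η * Real.sqrt 2) + Real.exp (-(pdx v q)))
      (fun q => -2 * Real.exp (u q)) := by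
  intro p hp
  have hpn : U ∈ nhds p := hU.mem_nhds hp
  have hup : ContDiffAt ℝ (⊤ : ℕ∞) u p := (hu p hp).contDiffAt hpn
  have hvp : ContDiffAt ℝ (⊤ : ℕ∞) v p := (hv p hp).contDiffAt hpn
  have hux : DifferentiableAt ℝ (pdx u) p :=
    (pdx_contDiffAt hup).differentiableAt (by simp)
  have hvx : DifferentiableAt ℝ (pdx v) p :=
    (pdx_contDiffAt hvp).differentiableAt (by simp)
  have hud : HasFDerivAt u (fderiv ℝ u p) p :=
    (hup.differentiableAt (by simp)).hasFDerivAt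
  have hvxd : HasFDerivAt (pdx v) (fderiv ℝ (pdx v) p) p := hvx.hasFDerivAt
  have sqrt2 : Real.sqrt 2 * Real.sqrt 2 = 2 := Real.mul_self_sqrt (by norm_num)
  -- derivatives of the exponentials
  have hexp_u : HasFDerivAt (fun q => Real.exp (u q))
      (Real.exp (u p) • fderiv ℝ u p) p := hud.exp
  have hF22 : HasFDerivAt (fun q => Real.sqrt 2 * Real.exp (u q))
      (Real.sqrt 2 • (Real.exp (u p) • fderiv ℝ u p)) p := hexp_u.const_smul (Real.sqrt 2)
  have hF32 : HasFDerivAt (fun q => -2 * Real.exp (u q))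
      ((-2 : ℝ) • (Real.exp (u p) • fderiv ℝ u p)) p := hexp_u.const_smul (-2 : ℝ)
  have hF31 : HasFDerivAt (fun q => -(η * Real.sqrt 2) + Real.exp (-(pdx v q)))
      (Real.exp (-(pdx v p)) • (-(fderiv ℝ (pdx v) p))) p := by
    simpa using (HasFDerivAt.exp hvxd.neg).const_add (-(η * Real.sqrt 2))
  have eF11 : pdt (fun q => -(Real.sqrt 2 / 2) * pdx u q) p
      = -(Real.sqrt 2 / 2) * pdt (pdx u) p := pd_const_mul _ hux _
  have eF22 : pdx (fun q => Real.sqrt 2 * Real.exp (u q)) p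
      = Real.sqrt 2 * (Real.exp (u p) * pdx u p) := by
    simp [pdx, hF22.fderiv]
  have eF32 : pdx (fun q => -2 * Real.exp (u q)) p
      = -2 * (Real.exp (u p) * pdx u p) := by
    simp only [pdx, hF32.fderiv, ContinuousLinearMap.smul_apply, smul_eq_mul]
  have eF31 : pdt (fun q => -(η * Real.sqrt 2) + Real.exp (-(pdx v q))) p
      = Real.exp (-(pdx v p)) * (-(pdt (pdx v) p)) := by
    simp [pdt, hF31.fderiv]
  refine ⟨?_, ?_, ?_⟩
  · rw [eF11, heq1 p hp, Real.exp_sub]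
    have : pdx (fun _ : ℝ × ℝ => (0 : ℝ)) p = 0 := by simp [pdx]
    rw [this]
    have h2 : Real.exp (u p) / Real.exp (pdx v p)
        = Real.exp (u p) * Real.exp (-(pdx v p)) := by
      rw [Real.exp_neg]; ring
    rw [h2]; linear_combination η * Real.exp (u p) * sqrt2
  · have h1 : pdt (fun _ : ℝ × ℝ => η) p = 0 := by simp [pdt]
    rw [h1, eF22]; ring
  · rw [eF31, eF32, heq2 p hp, Real.exp_add]
    have h3 : Real.exp (-(pdx v p)) * Real.exp (pdx v p) = 1 := by
      rw [← Real.exp_add]; simp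
    linear_combination Real.exp (u p) * pdx u p * h3 +
      Real.exp (u p) * pdx u p / 2 * sqrt2
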